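/- For c > 0, λ > 0, the integral of the density p(x,t) = (1/(2c·cosh(λt))) · ∂/∂t [I₀((λ/c)√(c²t² - x²))] over |x| < ct equals 1 - 1/cosh(λt). -/

import Mathlib

open Real MeasureTheory

/-- Modified Bessel function of the first kind of order 1. -/
noncomputable def besselI1 (z : ℝ) : ℝ :=
  ∑' k : ℕ, (z / 2) ^ (2 * k + 1) / ((Nat.factorial k : ℝ) * (Nat.factorial (k + 1) : ℝ))

open intervalIntegral
-- step 1: J n := ∫ u in -1..1, (1-u^2)^n = 2^(2n+1) (n!)^2 / (2n+1)!
theorem J_eq (n : ℕ) : ∫ u in (-1:ℝ)..1, (1 - u ^ 2) ^ n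
    = 2 ^ (2 * n + 1) * (n.factorial : ℝ) ^ 2 / ((2 * n + 1).factorial : ℝ) := by
  have key : ∀ m : ℕ, (∫ u in (-1:ℝ)..1, (1 - u ^ 2) ^ m)
      = ∫ x in (-(π/2))..(π/2), Real.cos x ^ (2 * m + 1) := by
    intro m
    have := integral_sin_pow_mul_cos_pow_odd (a := -(π/2)) (b := π/2) 0 m
    simp [Real.sin_pi_div_two] at this
    simpa using this.symm
  induction n with
  | zero => rw [key 0]; norm_num
  | succ k ih =>
    rw [key, show 2 * (k+1) + 1 = (2*k+1) + 2 by ring, integral_cos_pow]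
    rw [← key, ih]
    have h1 : Real.cos (π/2) = 0 := Real.cos_pi_div_two
    have h2 : Real.cos (-(π/2)) = 0 := by simp [Real.cos_pi_div_two]
    rw [h1, h2]
    have hk1 : ((2*k+1 : ℕ) : ℝ) + 2 ≠ 0 := by positivity
    have hne : ((2*k+1).factorial : ℝ) ≠ 0 := Nat.cast_ne_zero.2 (Nat.factorial_ne_zero _)
    have hfact : ((2*k+1+2).factorial : ℝ)
        = (2*k+3) * ((2*k+2)) * ((2*k+1).factorial) := by
      have : 2*k+1+2 = (2*k+2)+1 := by ring
      rw [this, Nat.factorial_succ, show (2*k+2) = (2*k+1)+1 by ring, Nat.factorial_succ]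
      push_cast; ring
    have hfac2 : ((k+1).factorial : ℝ) = (k+1) * k.factorial := by
      rw [Nat.factorial_succ]; push_cast; ring
    simp only [hfact, hfac2]
    have h4 : ((0:ℝ) ^ (2*k+1+1)) = 0 := zero_pow (by omega)
    rw [h4]
    have h3 : (0:ℝ) < (2*k:ℝ)+3 := by positivity
    have hkne : (k.factorial : ℝ) ≠ 0 := Nat.cast_ne_zero.2 (Nat.factorial_ne_zero _)
    push_cast
    field_simp
    ring

theorem K_eq (a : ℝ) (ha : 0 < a) (n : ℕ) :
    ∫ x in Set.Ioo (-a) a, (a ^ 2 - x ^ 2) ^ n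
      = a ^ (2 * n + 1) * 2 ^ (2 * n + 1) * (n.factorial : ℝ) ^ 2
        / ((2 * n + 1).factorial : ℝ) := by
  have hle : -a ≤ a := by linarith
  rw [← MeasureTheory.integral_Ioc_eq_integral_Ioo,
    ← intervalIntegral.integral_of_le hle]
  have hsub := smul_integral_comp_mul_left (a := (-1:ℝ)) (b := 1)
    (fun x => (a ^ 2 - x ^ 2) ^ n) a
  simp only [mul_neg, mul_one] at hsub
  rw [← hsub]
  have : ∀ u : ℝ, (a ^ 2 - (a * u) ^ 2) ^ n = (a^2)^n * (1 - u ^ 2) ^ n := by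
    intro u; rw [← mul_pow]; ring_nf
  simp only [this]
  rw [intervalIntegral.integral_const_mul, J_eq n]
  rw [smul_eq_mul]
  field_simp
  ring

/-- the absolutely continuous part of the `λ tanh(λt)`-telegraph law has total
mass `1 - 1/cosh(λt)` on `(-ct, ct)`. -/
theorem tanh_telegraph_ac_mass (c lam t : ℝ) (hc : 0 < c) (hlam : 0 < lam) (ht : 0 < t) :
    ∫ x in Set.Ioo (-(c * t)) (c * t),
      lam * t / (2 * Real.cosh (lam * t))
        * besselI1 (lam / c * Real.sqrt (c ^ 2 * t ^ 2 - x ^ 2))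
        / Real.sqrt (c ^ 2 * t ^ 2 - x ^ 2)
      = 1 - 1 / Real.cosh (lam * t) := by
  have hch : 0 < Real.cosh (lam * t) := Real.cosh_pos _
  have hw0 : 0 < lam * t := by positivity
  have ha0 : 0 < c * t := by positivity
  set w := lam * t with hwdef
  set a := c * t with hadef
  set D : ℕ → ℝ := fun k =>
    w / (2 * Real.cosh w) * (lam / (2 * c)) ^ (2 * k + 1)
      / ((Nat.factorial k : ℝ) * (Nat.factorial (k + 1) : ℝ)) with hDdef
  have hD0 : ∀ k, 0 ≤ D k := by
    intro k
    have h1 : (0:ℝ) < (Nat.factorial k : ℝ) := by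
      exact_mod_cast Nat.factorial_pos k
    have h2 : (0:ℝ) < (Nat.factorial (k+1) : ℝ) := by
      exact_mod_cast Nat.factorial_pos (k+1)
    positivity
  -- pointwise identity on the open interval
  have hpt : Set.EqOn
      (fun x => lam * t / (2 * Real.cosh (lam * t))
        * besselI1 (lam / c * Real.sqrt (c ^ 2 * t ^ 2 - x ^ 2))
        / Real.sqrt (c ^ 2 * t ^ 2 - x ^ 2))
      (fun x => ∑' k : ℕ, D k * (a ^ 2 - x ^ 2) ^ k)
      (Set.Ioo (-a) a) := by
    intro x hx
    obtain ⟨hx1, hx2⟩ := hx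
    have hs0 : 0 < a ^ 2 - x ^ 2 := by nlinarith [abs_lt.2 ⟨hx1, hx2⟩, sq_abs x]
    have hsa : c ^ 2 * t ^ 2 - x ^ 2 = a ^ 2 - x ^ 2 := by rw [hadef]; ring
    have hsq : 0 < Real.sqrt (a ^ 2 - x ^ 2) := Real.sqrt_pos.2 hs0
    simp only [hsa]
    rw [besselI1, ← tsum_mul_left, ← tsum_div_const]
    refine tsum_congr fun k => ?_
    have hpow : (lam / c * Real.sqrt (a ^ 2 - x ^ 2) / 2) ^ (2 * k + 1)
        = (lam / (2 * c)) ^ (2 * k + 1) * (a ^ 2 - x ^ 2) ^ k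
            * Real.sqrt (a ^ 2 - x ^ 2) := by
      have : lam / c * Real.sqrt (a ^ 2 - x ^ 2) / 2
          = lam / (2 * c) * Real.sqrt (a ^ 2 - x ^ 2) := by
        field_simp
      have hss : Real.sqrt (a ^ 2 - x ^ 2) ^ (2 * k + 1)
          = (a ^ 2 - x ^ 2) ^ k * Real.sqrt (a ^ 2 - x ^ 2) := by
        rw [pow_succ, pow_mul, Real.sq_sqrt hs0.le]
      rw [this, mul_pow, hss]
      ring
    rw [hpow, hDdef]
    field_simp
    ring
  rw [setIntegral_congr_fun measurableSet_Ioo hpt]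
  -- term-by-term integrals
  have hFval : ∀ k : ℕ, (∫ x in Set.Ioo (-a) a, D k * (a ^ 2 - x ^ 2) ^ k)
      = 1 / Real.cosh w * (w ^ (2 * (k + 1)) / ((2 * (k + 1)).factorial : ℝ)) := by
    intro k
    rw [MeasureTheory.integral_const_mul, K_eq a ha0 k]
    have h1 : (0:ℝ) < (Nat.factorial k : ℝ) := by exact_mod_cast Nat.factorial_pos k
    have h2 : ((k+1).factorial : ℝ) = (k+1) * k.factorial := by
      rw [Nat.factorial_succ]; push_cast; ring
    have h3 : ((2*(k+1)).factorial : ℝ) = (2*k+2) * ((2*k+1).factorial) := by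
      rw [show 2*(k+1) = (2*k+1)+1 by ring, Nat.factorial_succ]; push_cast; ring
    have h4 : (0:ℝ) < ((2*k+1).factorial : ℝ) := by exact_mod_cast Nat.factorial_pos _
    have hcomb : (lam / (2*c)) ^ (2*k+1) * a ^ (2*k+1) * 2 ^ (2*k+1)
        = w ^ (2*k+1) := by
      rw [← mul_pow, ← mul_pow]
      congr 1
      rw [hadef, hwdef]; field_simp
    rw [hDdef]
    simp only
    rw [h2, h3]
    rw [show w ^ (2*(k+1)) = w * w ^ (2*k+1) by rw [show 2*(k+1) = (2*k+1)+1 by ring]; ring]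
    rw [← hcomb]
    field_simp
  -- integrability
  have hFint : ∀ k : ℕ, IntegrableOn
      (fun x => D k * (a ^ 2 - x ^ 2) ^ k) (Set.Ioo (-a) a) volume := by
    intro k
    exact ((continuous_const.mul ((continuous_const.sub (continuous_pow 2)).pow k)
      ).integrableOn_Icc).mono_set Set.Ioo_subset_Icc_self
  -- nonnegativity on the set, so norms coincide
  have hFnorm : ∀ k : ℕ, (∫ x in Set.Ioo (-a) a, ‖D k * (a ^ 2 - x ^ 2) ^ k‖)
      = ∫ x in Set.Ioo (-a) a, D k * (a ^ 2 - x ^ 2) ^ k := by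
    intro k
    refine setIntegral_congr_fun measurableSet_Ioo fun x hx => ?_
    obtain ⟨hx1, hx2⟩ := hx
    have hs0 : 0 < a ^ 2 - x ^ 2 := by nlinarith [abs_lt.2 ⟨hx1, hx2⟩, sq_abs x]
    exact Real.norm_of_nonneg (mul_nonneg (hD0 k) (by positivity))
  -- summability
  have hsum0 : Summable (fun n : ℕ => w ^ (2 * n) / ((2 * n).factorial : ℝ)) :=
    (Real.hasSum_cosh w).summable
  have hsum1 : Summable (fun k : ℕ => 1 / Real.cosh w
      * (w ^ (2 * (k + 1)) / ((2 * (k + 1)).factorial : ℝ))) :=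
    ((hsum0.comp_injective (add_left_injective 1)).mul_left _)
  have hsumnorm : Summable fun k : ℕ =>
      ∫ x in Set.Ioo (-a) a, ‖D k * (a ^ 2 - x ^ 2) ^ k‖ := by
    refine hsum1.congr fun k => ?_
    rw [hFnorm k, hFval k]
  -- interchange
  have hinter := MeasureTheory.integral_tsum_of_summable_integral_norm
    (μ := volume.restrict (Set.Ioo (-a) a))
    (F := fun k x => D k * (a ^ 2 - x ^ 2) ^ k) hFint hsumnorm
  rw [← hinter]
  -- compute the sum
  have : (∑' k : ℕ, ∫ x in Set.Ioo (-a) a, D k * (a ^ 2 - x ^ 2) ^ k)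
      = 1 / Real.cosh w * ∑' k : ℕ, (w ^ (2 * (k + 1)) / ((2 * (k + 1)).factorial : ℝ)) := by
    rw [← tsum_mul_left]
    exact tsum_congr hFval
  rw [this]
  have htail : (∑' k : ℕ, (w ^ (2 * (k + 1)) / ((2 * (k + 1)).factorial : ℝ)))
      = Real.cosh w - 1 := by
    have h := Summable.sum_add_tsum_nat_add (f := fun n : ℕ => w ^ (2 * n) / ((2 * n).factorial : ℝ))
      1 hsum0
    rw [(Real.hasSum_cosh w).tsum_eq] at h
    simp [Finset.sum_range_one] at h
    have : (∑' k : ℕ, (w ^ (2 * (k + 1)) / ((2 * (k + 1)).factorial : ℝ)))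
        = ∑' k : ℕ, w ^ (2 * (k + 1)) / ((2 * (k + 1)).factorial : ℝ) := rfl
    linarith [h]
  rw [htail]
  field_simp
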